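/- Let A = {p₁,…,pₙ} and B = {q₁,…,qₙ} be two d-dimensional finite subsets of ℤ^d with the same volume vector w, and suppose the gcd of all entries of w equals 1. Then there is an affine unimodular transformation t of ℝ^d with t(ℤ^d) = ℤ^d and t(p_i) = q_i for all i. -/

import Mathlib

/-- The signed normalized volume of the (d+1) points `p ∘ σ` of `ℤ^d`. -/
def volDet {d n : ℕ} (p : Fin n → Fin d → ℤ) (σ : Fin (d + 1) → Fin n) : ℤ :=
  Matrix.det (Matrix.of fun i j => (Fin.cons 1 (fun i' => p (σ j) i') : Fin (d + 1) → ℤ) i)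

/-- The lattice ℤ^d, viewed inside ℝ^d. -/
def intLattice (d : ℕ) : Set (Fin d → ℝ) := {x | ∀ i, ∃ m : ℤ, x i = m}

namespace VolAux
variable {d n : ℕ}

/-- extended point `(1, p k)` -/
def ept (p : Fin n → Fin d → ℤ) (k : Fin n) : Fin (d+1) → ℤ := Fin.cons 1 (p k)

def eMat (p : Fin n → Fin d → ℤ) (σ : Fin (d+1) → Fin n) : Matrix (Fin (d+1)) (Fin (d+1)) ℤ :=
  Matrix.of fun i j => ept p (σ j) i

lemma volDet_eq (p : Fin n → Fin d → ℤ) (σ : Fin (d+1) → Fin n) :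
    volDet p σ = (eMat p σ).det := rfl

lemma updCol (p : Fin n → Fin d → ℤ) (σ : Fin (d+1) → Fin n) (j : Fin (d+1)) (k : Fin n) :
    (eMat p σ).updateCol j (ept p k) = eMat p (Function.update σ j k) := by
  ext i l
  by_cases h : l = j <;> simp [Matrix.updateCol_apply, Function.update, h, eMat]

lemma volDet_comp_perm (p : Fin n → Fin d → ℤ) (σ : Fin (d+1) → Fin n)
    (π : Equiv.Perm (Fin (d+1))) :
    volDet p (σ ∘ π) = (↑(Equiv.Perm.sign π) : ℤ) * volDet p σ := by
  rw [volDet_eq, volDet_eq]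
  have : eMat p (σ ∘ π) = (eMat p σ).submatrix id π := rfl
  rw [this, Matrix.det_permute']; norm_cast

lemma volDet_ext {p q : Fin n → Fin d → ℤ}
    (hw : ∀ σ : Fin (d + 1) → Fin n, StrictMono σ → volDet p σ = volDet q σ)
    (τ : Fin (d+1) → Fin n) : volDet p τ = volDet q τ := by
  by_cases hinj : Function.Injective τ
  · set π := Tuple.sort τ with hπ
    have hm : StrictMono (τ ∘ π) :=
      (Tuple.monotone_sort τ).strictMono_of_injective (hinj.comp π.injective)
    have h1 := volDet_comp_perm p τ π
    have h2 := volDet_comp_perm q τ π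
    have h3 := hw _ hm
    have hs : ((Equiv.Perm.sign π : ℤˣ) : ℤ) ≠ 0 := Units.ne_zero _
    exact mul_left_cancel₀ hs (by rw [← h1, ← h2, h3])
  · obtain ⟨i, j, hij, hne⟩ := Function.not_injective_iff.mp hinj
    rw [volDet_eq, volDet_eq,
      Matrix.det_zero_of_column_eq hne (fun k => by simp [eMat, ept, hij]),
      Matrix.det_zero_of_column_eq hne (fun k => by simp [eMat, ept, hij])]

lemma mulVec_mem_span (A : Matrix (Fin (d+1)) (Fin (d+1)) ℤ) (y : Fin (d+1) → ℤ)
    (S : Submodule ℤ (Fin (d+1) → ℤ)) (hA : ∀ l, (fun i => A i l) ∈ S) :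
    A.mulVec y ∈ S := by
  have : A.mulVec y = ∑ l, y l • (fun i => A i l) := by
    funext i
    simp [Matrix.mulVec, dotProduct, Finset.sum_apply, mul_comm]
  rw [this]
  exact Submodule.sum_mem _ fun l _ => Submodule.smul_mem _ _ (hA l)

lemma span_ept_top (a : Fin n → Fin d → ℤ)
    (hga : ∀ m : ℤ, (∀ σ : Fin (d + 1) → Fin n, StrictMono σ → m ∣ volDet a σ) → IsUnit m) :
    Submodule.span ℤ (Set.range (ept a)) = ⊤ := by
  set S := Submodule.span ℤ (Set.range (ept a)) with hS
  have key : ∀ (σ : Fin (d+1) → Fin n) (b : Fin (d+1) → ℤ), volDet a σ • b ∈ S := by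
    intro σ b
    have h1 : volDet a σ • b = (eMat a σ).mulVec (Matrix.cramer (eMat a σ) b) := by
      rw [Matrix.mulVec_cramer, volDet_eq]
    rw [h1]
    exact mulVec_mem_span _ _ _ fun l => Submodule.subset_span ⟨σ l, rfl⟩
  set J : Ideal ℤ := Ideal.span {z | ∃ σ : Fin (d+1) → Fin n, StrictMono σ ∧ volDet a σ = z}
    with hJdef
  have hJ : J = ⊤ := by
    obtain ⟨g, hg⟩ := IsPrincipalIdealRing.principal J
    have hu : IsUnit g := by
      refine hga g fun σ hσ => ?_
      have : volDet a σ ∈ J := Ideal.subset_span ⟨σ, hσ, rfl⟩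
      rw [hg] at this
      exact Ideal.mem_span_singleton.mp this
    rw [hg]
    exact Ideal.span_singleton_eq_top.mpr hu
  rw [eq_top_iff]
  intro b _
  have hIb : J ≤ Submodule.comap (LinearMap.toSpanSingleton ℤ (Fin (d+1) → ℤ) b) S := by
    rw [hJdef, Ideal.span_le]
    rintro z ⟨σ, hσ, rfl⟩
    exact key σ b
  have h1 : (1 : ℤ) ∈ J := hJ ▸ Submodule.mem_top
  simpa using hIb h1

lemma transfer {a b : Fin n → Fin d → ℤ}
    (h : ∀ τ : Fin (d+1) → Fin n, volDet a τ = volDet b τ)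
    (σ₀ : Fin (d+1) → Fin n) (h0 : volDet b σ₀ ≠ 0)
    (c : Fin n → ℤ) (hc : ∑ k, c k • ept a k = 0) :
    ∑ k, c k • ept b k = 0 := by
  set u := ∑ k, c k • ept b k with hu
  have hcr : Matrix.cramer (eMat b σ₀) u = 0 := by
    funext j
    have expand : Matrix.cramer (eMat b σ₀) u j
        = ∑ k, c k * Matrix.cramer (eMat b σ₀) (ept b k) j := by
      rw [hu, map_sum]
      simp only [map_smul, Finset.sum_apply, Pi.smul_apply, smul_eq_mul]
    have term : ∀ k, Matrix.cramer (eMat b σ₀) (ept b k) j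
        = Matrix.cramer (eMat a σ₀) (ept a k) j := by
      intro k
      rw [Matrix.cramer_apply, Matrix.cramer_apply, updCol, updCol,
        ← volDet_eq, ← volDet_eq, h]
    have expand2 : ∑ k, c k * Matrix.cramer (eMat a σ₀) (ept a k) j
        = Matrix.cramer (eMat a σ₀) (∑ k, c k • ept a k) j := by
      rw [map_sum]
      simp only [map_smul, Finset.sum_apply, Pi.smul_apply, smul_eq_mul]
    rw [expand]
    simp only [term]
    rw [expand2, hc, map_zero]
  have hm := Matrix.mulVec_cramer (eMat b σ₀) u
  rw [hcr, Matrix.mulVec_zero, ← volDet_eq] at hm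
  rcases smul_eq_zero.mp hm.symm with h' | h'
  · exact absurd h' h0
  · exact h'

lemma sum_single_smul (u : Fin n → Fin (d+1) → ℤ) (m : Fin n) :
    ∑ k, (Pi.single m 1 : Fin n → ℤ) k • u k = u m := by
  rw [Finset.sum_eq_single m]
  · simp
  · intro k _ hk
    rw [Pi.single_eq_of_ne hk, zero_smul]
  · intro h; exact absurd (Finset.mem_univ m) h

lemma exists_linear (v w : Fin n → Fin (d+1) → ℤ)
    (hspan : Submodule.span ℤ (Set.range v) = ⊤)
    (hrel : ∀ c : Fin n → ℤ, ∑ k, c k • v k = 0 → ∑ k, c k • w k = 0) :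
    ∃ f : (Fin (d+1) → ℤ) →ₗ[ℤ] (Fin (d+1) → ℤ), ∀ k, f (v k) = w k := by
  have hmem : ∀ j : Fin (d+1), (Pi.single j 1 : Fin (d+1) → ℤ) ∈ Submodule.span ℤ (Set.range v) :=
    fun j => hspan ▸ Submodule.mem_top
  choose c hc using fun j => Submodule.mem_span_range_iff_exists_fun (R := ℤ) |>.mp (hmem j)
  set F : Matrix (Fin (d+1)) (Fin (d+1)) ℤ := Matrix.of fun i l => ∑ k, c l k * w k i with hF
  refine ⟨F.mulVecLin, fun m => ?_⟩
  set e : Fin n → ℤ := fun k => ∑ l, v m l * c l k with he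
  have h1 : F.mulVecLin (v m) = ∑ k, e k • w k := by
    funext i
    simp only [Matrix.mulVecLin_apply, Matrix.mulVec, dotProduct, hF, Matrix.of_apply,
      Finset.sum_apply, Pi.smul_apply, smul_eq_mul, he, Finset.sum_mul]
    rw [Finset.sum_comm]
    congr 1; funext l; congr 1; funext k; ring
  have h2 : ∑ k, e k • v k = v m := by
    have step : ∑ k, e k • v k = ∑ l, v m l • ∑ k, c l k • v k := by
      simp only [he, Finset.sum_smul]
      rw [Finset.sum_comm]
      simp only [Finset.smul_sum, smul_smul]
    rw [step]
    funext i
    simp only [hc, Finset.sum_apply, Pi.smul_apply, smul_eq_mul, Pi.single_apply]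
    simp [Finset.sum_ite_eq]
  have h3 : ∑ k, (e k - (Pi.single m 1 : Fin n → ℤ) k) • v k = 0 := by
    simp only [sub_smul, Finset.sum_sub_distrib]
    rw [h2, sum_single_smul, sub_self]
  have h4 := hrel _ h3
  simp only [sub_smul, Finset.sum_sub_distrib, sub_eq_zero] at h4
  rw [h1, h4, sum_single_smul]

lemma cons_decomp (x : Fin d → ℤ) :
    (Fin.cons 1 x : Fin (d+1) → ℤ)
      = Pi.single 0 1 + ∑ j, x j • (Pi.single (Fin.succ j) 1 : Fin (d+1) → ℤ) := by
  funext i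
  induction i using Fin.cases with
  | zero =>
    have hz : ∀ j : Fin d, (Pi.single (Fin.succ j) (1:ℤ) : Fin (d+1) → ℤ) 0 = 0 :=
      fun j => Pi.single_eq_of_ne (Ne.symm (Fin.succ_ne_zero j)) 1
    simp [hz]
  | succ i =>
    have h0 : (Pi.single 0 (1:ℤ) : Fin (d+1) → ℤ) i.succ = 0 :=
      Pi.single_eq_of_ne (Fin.succ_ne_zero i) 1
    simp only [Fin.cons_succ, Pi.add_apply, h0, Finset.sum_apply, Pi.smul_apply,
      smul_eq_mul, zero_add]
    rw [Finset.sum_eq_single i]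
    · simp
    · intro j _ hj
      have : (Pi.single (Fin.succ j) (1:ℤ) : Fin (d+1) → ℤ) i.succ = 0 :=
        Pi.single_eq_of_ne (fun h => hj (Fin.succ_injective _ h).symm) 1
      rw [this, mul_zero]
    · intro h; exact absurd (Finset.mem_univ i) h

lemma key_block (f : (Fin (d+1) → ℤ) →ₗ[ℤ] (Fin (d+1) → ℤ))
    (hf0 : ∀ x, f x 0 = x 0) (x : Fin d → ℤ) :
    f (Fin.cons 1 x) = Fin.cons 1 (fun i =>
      f (Pi.single 0 1) i.succ + ∑ j, x j * f (Pi.single (Fin.succ j) 1) i.succ) := by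
  have hdec := cons_decomp x
  funext i
  induction i using Fin.cases with
  | zero => rw [hf0, Fin.cons_zero, Fin.cons_zero]
  | succ i =>
    rw [Fin.cons_succ, hdec, map_add, map_sum]
    simp only [Pi.add_apply, Finset.sum_apply, map_smul, Pi.smul_apply, smul_eq_mul]

end VolAux

theorem unimodular_equiv_of_volume_vector_gcd_one {d n : ℕ} (hn : d + 1 ≤ n)
    (p q : Fin n → Fin d → ℤ)
    (hp : affineSpan ℝ (Set.range fun k => fun i => ((p k i : ℝ))) = ⊤)
    (hq : affineSpan ℝ (Set.range fun k => fun i => ((q k i : ℝ))) = ⊤)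
    (hw : ∀ σ : Fin (d + 1) → Fin n, StrictMono σ → volDet p σ = volDet q σ)
    (hgcd : ∀ m : ℤ, (∀ σ : Fin (d + 1) → Fin n, StrictMono σ → m ∣ volDet p σ) → IsUnit m) :
    ∃ t : (Fin d → ℝ) →ᵃ[ℝ] (Fin d → ℝ),
      LinearMap.det t.linear = 1 ∧
      t '' intLattice d = intLattice d ∧
      ∀ k, t (fun i => (p k i : ℝ)) = fun i => (q k i : ℝ) := by
  open VolAux in
  have hwe : ∀ τ : Fin (d+1) → Fin n, volDet p τ = volDet q τ := volDet_ext hw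
  -- a strictly monotone tuple with nonzero volume
  obtain ⟨σ₀, hσ₀m, hσ₀⟩ : ∃ σ : Fin (d+1) → Fin n, StrictMono σ ∧ volDet p σ ≠ 0 := by
    by_contra h
    push_neg at h
    have : IsUnit (0 : ℤ) := hgcd 0 (fun σ hσ => by rw [h σ hσ])
    simpa using this
  have hq0 : volDet q σ₀ ≠ 0 := by rw [← hwe]; exact hσ₀
  have hgq : ∀ m : ℤ, (∀ σ : Fin (d + 1) → Fin n, StrictMono σ → m ∣ volDet q σ) → IsUnit m :=
    fun m hm => hgcd m (fun σ hσ => (hw σ hσ) ▸ hm σ hσ)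
  have spanp := span_ept_top p hgcd
  have spanq := span_ept_top q hgq
  obtain ⟨f, hf⟩ := exists_linear (ept p) (ept q) spanp (fun c hc => transfer hwe σ₀ hq0 c hc)
  obtain ⟨g, hg⟩ := exists_linear (ept q) (ept p) spanq
    (fun c hc => transfer (fun τ => (hwe τ).symm) σ₀ hσ₀ c hc)
  have hf0 : ∀ x, f x 0 = x 0 := by
    have heq : (LinearMap.proj 0 : ((Fin (d+1) → ℤ)) →ₗ[ℤ] ℤ).comp f = LinearMap.proj 0 := by
      apply LinearMap.ext_on spanp
      rintro x ⟨k, rfl⟩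
      show (f (ept p k)) 0 = (ept p k) 0
      rw [hf k]
      simp [ept]
    intro x; exact LinearMap.congr_fun heq x
  have hg0 : ∀ x, g x 0 = x 0 := by
    have heq : (LinearMap.proj 0 : ((Fin (d+1) → ℤ)) →ₗ[ℤ] ℤ).comp g = LinearMap.proj 0 := by
      apply LinearMap.ext_on spanq
      rintro x ⟨k, rfl⟩
      show (g (ept q k)) 0 = (ept q k) 0
      rw [hg k]
      simp [ept]
    intro x; exact LinearMap.congr_fun heq x
  have hfg : ∀ x, f (g x) = x := by
    have heq : f.comp g = LinearMap.id := by
      apply LinearMap.ext_on spanq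
      rintro x ⟨k, rfl⟩
      show f (g (ept q k)) = ept q k
      rw [hg k, hf k]
    intro x; exact LinearMap.congr_fun heq x
  -- integer translation and matrix
  set cz : Fin d → ℤ := fun i => f (Pi.single 0 1) i.succ with hcz
  set L : Matrix (Fin d) (Fin d) ℤ :=
    Matrix.of (fun i j => f (Pi.single (Fin.succ j) 1) i.succ) with hLdef
  have keyf : ∀ x : Fin d → ℤ,
      f (Fin.cons 1 x) = Fin.cons 1 (fun i => cz i + (L.mulVec x) i) := by
    intro x
    have hmv : ∀ i, (L.mulVec x) i = ∑ j, x j * f (Pi.single (Fin.succ j) 1) i.succ := by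
      intro i
      simp [Matrix.mulVec, dotProduct, hLdef, mul_comm]
    rw [key_block f hf0 x]
    exact congrArg (Fin.cons 1) (funext fun i => by rw [hmv i])
  -- points are mapped correctly (integrally)
  have hpq : ∀ k, (fun i => cz i + (L.mulVec (p k)) i) = q k := by
    intro k
    have h1 : f (Fin.cons 1 (p k)) = ept q k := hf k
    rw [keyf] at h1
    funext i
    have h2 := congrFun h1 i.succ
    simpa [Fin.cons_succ, ept] using h2
  -- determinant of L is 1
  set F : Matrix (Fin (d+1)) (Fin (d+1)) ℤ := LinearMap.toMatrix' f with hFdef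
  have hFvec : ∀ x, F.mulVec x = f x := by
    intro x
    rw [hFdef, ← Matrix.toLin'_apply, Matrix.toLin'_toMatrix']
  have hFapp : ∀ i j, F i j = f (Pi.single j 1) i := by
    intro i j
    have hss : (fun j' : Fin (d+1) => if j' = j then (1:ℤ) else 0) = Pi.single j 1 := by
      funext j'
      rw [Pi.single_apply]
    rw [hFdef, LinearMap.toMatrix'_apply]
  have hFL : F.det = L.det := by
    rw [Matrix.det_succ_row_zero, Finset.sum_eq_single 0]
    · have hsub : F.submatrix Fin.succ (Fin.succAbove 0) = L := by
        ext i j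
        rw [Matrix.submatrix_apply, Fin.succAbove_zero, hFapp]
        rfl
      have h00 : F 0 0 = 1 := by
        rw [hFapp, hf0, Pi.single_eq_same]
      rw [hsub, h00]
      simp
    · intro j _ hj
      have : F 0 j = 0 := by
        rw [hFapp, hf0, Pi.single_eq_of_ne (Ne.symm hj)]
      rw [this]
      ring
    · intro h; exact absurd (Finset.mem_univ 0) h
  have hMat : eMat q σ₀ = F * eMat p σ₀ := by
    ext i j
    have h1 : (F * eMat p σ₀) i j = (F.mulVec (ept p (σ₀ j))) i := by
      simp [Matrix.mul_apply, Matrix.mulVec, dotProduct, eMat]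
    rw [h1, hFvec, hf]
    rfl
  have hdetF : F.det = 1 := by
    have h1 : volDet q σ₀ = F.det * volDet p σ₀ := by
      rw [volDet_eq, volDet_eq, hMat, Matrix.det_mul]
    have h2 : F.det * volDet p σ₀ = 1 * volDet p σ₀ := by
      rw [one_mul, ← h1, hwe]
    exact mul_right_cancel₀ hσ₀ h2
  have hdetL : L.det = 1 := by rw [← hFL, hdetF]
  -- pass to the reals
  set Lr : Matrix (Fin d) (Fin d) ℝ := L.map (Int.castRingHom ℝ) with hLr
  set cr : Fin d → ℝ := fun i => (cz i : ℝ) with hcr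
  have tcast : ∀ xz : Fin d → ℤ,
      cr + Lr.mulVec (fun i => (xz i : ℝ)) = fun i => ((cz i + (L.mulVec xz) i : ℤ) : ℝ) := by
    intro xz
    funext i
    simp only [Pi.add_apply, hcr, hLr, Matrix.mulVec, dotProduct,
      Matrix.map_apply, Int.coe_castRingHom]
    push_cast
    ring
  refine ⟨{ toFun := fun x => cr + Lr.mulVec x,
            linear := Lr.mulVecLin,
            map_vadd' := by
              intro pt v
              simp only [vadd_eq_add, Matrix.mulVec_add, Matrix.mulVecLin_apply]
              abel }, ?_, ?_, ?_⟩
  · -- determinant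
    have h1 : Lr.mulVecLin = Matrix.toLin' Lr := by
      apply LinearMap.ext
      intro x
      rw [Matrix.toLin'_apply, Matrix.mulVecLin_apply]
    show LinearMap.det (Lr.mulVecLin) = 1
    have h2 : Lr.det = (1 : ℝ) := by
      rw [hLr, ← RingHom.mapMatrix_apply, ← RingHom.map_det, hdetL]
      simp
    rw [h1, LinearMap.det_toLin', h2]
  · -- lattice
    apply Set.Subset.antisymm
    · rintro y ⟨x, hx, rfl⟩
      choose xz hxz using hx
      have hx' : x = fun i => (xz i : ℝ) := funext fun i => hxz i
      intro i
      refine ⟨cz i + L.mulVec xz i, ?_⟩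
      show (cr + Lr.mulVec x) i = _
      rw [hx', tcast xz]
    · intro y hy
      choose yz hyz using hy
      set xz : Fin d → ℤ := fun i => g (Fin.cons 1 yz) i.succ with hxz
      have h1 : (Fin.cons 1 xz : Fin (d+1) → ℤ) = g (Fin.cons 1 yz) := by
        funext i
        induction i using Fin.cases with
        | zero => rw [Fin.cons_zero, hg0, Fin.cons_zero]
        | succ i => rw [Fin.cons_succ]
      have h2 : f (Fin.cons 1 xz) = Fin.cons 1 yz := by rw [h1, hfg]
      rw [keyf] at h2
      have h3 : ∀ i, cz i + L.mulVec xz i = yz i := by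
        intro i
        have h4 := congrFun h2 i.succ
        simpa [Fin.cons_succ] using h4
      refine ⟨fun i => (xz i : ℝ), fun i => ⟨xz i, rfl⟩, ?_⟩
      show cr + Lr.mulVec (fun i => (xz i : ℝ)) = y
      rw [tcast xz]
      funext i
      rw [h3 i, ← hyz i]
  · -- points
    intro k
    show cr + Lr.mulVec (fun i => (p k i : ℝ)) = fun i => (q k i : ℝ)
    rw [tcast (p k)]
    funext i
    rw [show cz i + (L.mulVec (p k)) i = q k i from congrFun (hpq k) i]
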